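/- For every integer n ≥ 0, the deterministic random walk satisfies S_n(√2 − 1) ≥ 0. -/

import Mathlib

/-- The deterministic random walk `S_n(ξ) = ∑_{j=1}^n (-1)^⌊j·ξ⌋`. -/
noncomputable def S (ξ : ℝ) (n : ℕ) : ℤ :=
  ∑ j ∈ Finset.Icc 1 n, ((Int.negOnePow ⌊(j : ℝ) * ξ⌋ : ℤˣ) : ℤ)

namespace SWaux

noncomputable def θ : ℝ := Real.sqrt 2 - 1

lemma sqrt2_sq : Real.sqrt 2 * Real.sqrt 2 = 2 := Real.mul_self_sqrt (by norm_num)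

lemma θ_nonneg : 0 ≤ θ := by
  have h := sqrt2_sq; have h0 := Real.sqrt_nonneg 2
  unfold θ; nlinarith

lemma θ_lt_one : θ < 1 := by
  have h := sqrt2_sq; have h0 := Real.sqrt_nonneg 2
  unfold θ; nlinarith

lemma θ_alg : θ * (2 + θ) = 1 := by
  have h := sqrt2_sq; unfold θ; nlinarith

lemma θ_irr (k : ℕ) (hk : k ≠ 0) : Irrational ((k : ℝ) * θ) := by
  have h1 : Irrational (Real.sqrt 2 - ((1 : ℤ) : ℝ)) := irrational_sqrt_two.sub_intCast 1
  have h2 : Irrational θ := by simpa [θ] using h1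
  exact Irrational.natCast_mul h2 hk

noncomputable def F (n : ℕ) : ℤ := ⌊(n : ℝ) * θ⌋

noncomputable def g (n : ℕ) : ℕ := (F n).toNat

lemma F_nonneg (n : ℕ) : 0 ≤ F n :=
  Int.floor_nonneg.2 (mul_nonneg (by positivity) θ_nonneg)

lemma g_cast (n : ℕ) : (g n : ℤ) = F n := Int.toNat_of_nonneg (F_nonneg n)

lemma g_castR (n : ℕ) : (g n : ℝ) = ((F n : ℤ) : ℝ) := by
  exact_mod_cast congrArg (Int.cast : ℤ → ℝ) (g_cast n)

lemma F_zero : F 0 = 0 := by simp [F]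

lemma F_lt (n : ℕ) (hn : 1 ≤ n) : F n < n := by
  have h : (n : ℝ) * θ < (n : ℝ) * 1 := by
    apply mul_lt_mul_of_pos_left θ_lt_one
    exact_mod_cast Nat.pos_of_ne_zero (by omega)
  have h2 : ((F n : ℤ) : ℝ) ≤ (n : ℝ) * θ := Int.floor_le _
  have h3 : ((F n : ℤ) : ℝ) < ((n : ℤ) : ℝ) := by push_cast at *; linarith
  exact_mod_cast h3

lemma F_mono (n : ℕ) : F n ≤ F (n + 1) := by
  apply Int.floor_le_floor
  have h : (n : ℝ) ≤ (n : ℝ) + 1 := by linarith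
  calc (n:ℝ) * θ ≤ ((n:ℝ)+1) * θ := mul_le_mul_of_nonneg_right h θ_nonneg
    _ = ((n+1 : ℕ) : ℝ) * θ := by push_cast; ring

lemma F_succ_le (n : ℕ) : F (n + 1) ≤ F n + 1 := by
  have h1 : (n : ℝ) * θ < F n + 1 := Int.lt_floor_add_one _
  have h2 : ((n + 1 : ℕ) : ℝ) * θ < ((F n + 1 + 1 : ℤ) : ℝ) := by
    push_cast
    have := θ_lt_one
    have := θ_nonneg
    nlinarith
  have h3 := Int.floor_lt.2 h2
  unfold F at *
  omega

lemma floor_strict (k : ℕ) (hk : k ≠ 0) : ((F k : ℤ) : ℝ) < (k : ℝ) * θ := by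
  have h := Int.floor_le ((k : ℝ) * θ)
  have hne : (k : ℝ) * θ ≠ ((F k : ℤ) : ℝ) := (θ_irr k hk).ne_int (F k)
  exact lt_of_le_of_ne h (fun he => hne he.symm)

lemma low (n : ℕ) (hn : 1 ≤ n) : 2 * F n + F (g n) + 1 ≤ (n : ℤ) := by
  rcases Nat.eq_zero_or_pos (g n) with h0 | hpos
  · have hF : F n = 0 := by have := g_cast n; omega
    rw [hF, h0, F_zero]
    omega
  · have hFpos : 1 ≤ F n := by have := g_cast n; omega
    have h1 : ((F n : ℤ) : ℝ) ≤ (n : ℝ) * θ := Int.floor_le _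
    have h2 : ((F (g n) : ℤ) : ℝ) < (g n : ℝ) * θ := floor_strict (g n) (by omega)
    have h3 : (g n : ℝ) = ((F n : ℤ) : ℝ) := g_castR n
    have halg := θ_alg
    have hθ0 := θ_nonneg
    have key : ((2 * F n + F (g n) : ℤ) : ℝ) < ((n : ℤ) : ℝ) := by
      push_cast at *
      nlinarith [mul_le_mul_of_nonneg_right h1 (by linarith : (0:ℝ) ≤ 2 + θ)]
    have h4 : (2 * F n + F (g n) : ℤ) < (n : ℤ) := by exact_mod_cast key
    omega

lemma high (n : ℕ) : (n : ℤ) ≤ 2 * F n + 2 + F (g n + 1) := by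
  have h1 : (n : ℝ) * θ < ((F n : ℤ) : ℝ) + 1 := Int.lt_floor_add_one _
  have halg := θ_alg
  have hθ0 := θ_nonneg
  have h3 : (g n : ℝ) = ((F n : ℤ) : ℝ) := g_castR n
  have h2 : ((n : ℤ) : ℝ) - 2 * ((F n : ℤ) : ℝ) - 2 ≤ ((g n + 1 : ℕ) : ℝ) * θ := by
    push_cast at *
    nlinarith [mul_lt_mul_of_pos_right h1 (by linarith : (0:ℝ) < 2 + θ)]
  have h4 : (n : ℤ) - 2 * F n - 2 ≤ F (g n + 1) := by
    apply Int.le_floor.2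
    push_cast at h2 ⊢
    linarith
  omega

lemma jumpEq (m : ℕ) (h : F (m + 1) = F m + 1) :
    (m : ℤ) = 2 * F m + 2 + F (g m + 1) := by
  have hle : ((F m + 1 : ℤ) : ℝ) ≤ ((m + 1 : ℕ) : ℝ) * θ := by
    apply Int.le_floor.1
    rw [← h]; exact le_refl _
  have h1 : (m : ℝ) * θ < ((F m : ℤ) : ℝ) + 1 := Int.lt_floor_add_one _
  have halg := θ_alg
  have hθ0 := θ_nonneg
  have hgr : (g m : ℝ) = ((F m : ℤ) : ℝ) := g_castR m
  have hxirr : Irrational (((g m + 1 : ℕ) : ℝ) * θ) := θ_irr (g m + 1) (by omega)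
  have hub : ((g m + 1 : ℕ) : ℝ) * θ ≤ ((m : ℤ) : ℝ) - 2 * ((F m : ℤ) : ℝ) - 1 := by
    push_cast at hle ⊢
    rw [hgr]
    push_cast
    nlinarith [mul_le_mul_of_nonneg_right hle (by linarith : (0:ℝ) ≤ 2 + θ)]
  have hne : ((g m + 1 : ℕ) : ℝ) * θ ≠ (((m : ℤ) - 2 * F m - 1 : ℤ) : ℝ) := hxirr.ne_int _
  have hub' : ((g m + 1 : ℕ) : ℝ) * θ < ((m : ℤ) : ℝ) - 2 * ((F m : ℤ) : ℝ) - 1 := by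
    apply lt_of_le_of_ne hub
    intro hcon
    apply hne
    rw [hcon]
    push_cast
    ring
  have hlb : (((m : ℤ) - 2 * F m - 2 : ℤ) : ℝ) ≤ ((g m + 1 : ℕ) : ℝ) * θ := by
    push_cast
    rw [hgr]
    push_cast at h1 ⊢
    nlinarith [mul_lt_mul_of_pos_right h1 (by linarith : (0:ℝ) < 2 + θ)]
  have hfl : F (g m + 1) = (m : ℤ) - 2 * F m - 2 := by
    apply Int.floor_eq_iff.2
    constructor
    · exact hlb
    · push_cast at hub' ⊢
      linarith
  omega

lemma S_succ (n : ℕ) : S θ (n + 1) = S θ n + ((F (n + 1)).negOnePow : ℤ) := by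
  unfold S F
  rw [Finset.sum_Icc_succ_top (by omega : 1 ≤ n + 1)]

lemma S_zero : S θ 0 = 0 := by simp [S]

/-- The key renormalization identity. -/
lemma ident (n : ℕ) : S θ n = S θ (g (g n)) +
    ((F n).negOnePow : ℤ) * ((n : ℤ) - 2 * F n - F (g n)) + 1 - ((F n).negOnePow : ℤ) := by
  induction n with
  | zero =>
    have : g 0 = 0 := by unfold g; rw [F_zero]; rfl
    rw [this, this, S_zero, F_zero]
    simp
  | succ n ih =>
    have hmono := F_mono n
    have hsuc := F_succ_le n
    have hS := S_succ n
    rcases (by omega : F (n + 1) = F n ∨ F (n + 1) = F n + 1) with hb | hb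
    · -- no level change
      have hg : g (n + 1) = g n := by unfold g; rw [hb]
      rw [hS, hb, hg, ih]
      push_cast
      ring
    · -- level change
      have hg : g (n + 1) = g n + 1 := by
        have h1 := g_cast (n + 1)
        have h2 := g_cast n
        rw [hb] at h1
        omega
      have hmono2 := F_mono (g n)
      have hsuc2 := F_succ_le (g n)
      have hlow := low (n + 1) (by omega)
      have hhigh := high n
      rw [hg] at hlow ⊢
      rcases (by omega : F (g n + 1) = F (g n) ∨ F (g n + 1) = F (g n) + 1) with hd | hd
      · -- d = c : n = 2a + c + 2
        have hn : (n : ℤ) = 2 * F n + F (g n) + 2 := by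
          rw [hb, hd] at hlow
          rw [hd] at hhigh
          push_cast at hlow
          omega
        have hgg : g (g n + 1) = g (g n) := congrArg Int.toNat hd
        rw [hS, hb, hgg, ih, Int.negOnePow_succ, hd]
        push_cast
        rw [hn]
        push_cast
        ring
      · -- d = c + 1 : n = 2a + c + 3, and jump identity
        have hn : (n : ℤ) = 2 * F n + F (g n) + 3 := by
          rw [hb, hd] at hlow
          rw [hd] at hhigh
          push_cast at hlow
          omega
        have hj := jumpEq (g n) hd
        -- hj : (g n : ℤ) = 2 * F (g n) + 2 + F (g (g n) + 1)
        have hgg : g (g n + 1) = g (g n) + 1 := by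
          have h1 := g_cast (g n + 1)
          have h2 := g_cast (g n)
          rw [hd] at h1
          omega
        have hSg : S θ (g (g n) + 1) = S θ (g (g n)) + ((F (g (g n) + 1)).negOnePow : ℤ) :=
          S_succ (g (g n))
        -- parity : F n ≡ F (g (g n) + 1) (mod 2)
        have hpar : (F n).negOnePow = (F (g (g n) + 1)).negOnePow := by
          have hFn : F n = 2 * F (g n) + 2 + F (g (g n) + 1) := by
            have := g_cast n
            omega
          rw [hFn]
          rw [Int.negOnePow_eq_iff]
          exact ⟨F (g n) + 1, by ring⟩
        rw [hS, hb, hgg, hSg, ih, Int.negOnePow_succ, ← hpar, hd]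
        push_cast
        rw [hn]
        push_cast
        ring

lemma main : ∀ n : ℕ, 0 ≤ S θ n := by
  intro n
  induction n using Nat.strong_induction_on with
  | _ n ih =>
    rcases Nat.eq_zero_or_pos n with rfl | hn
    · rw [S_zero]
    · have hid := ident n
      have hgn : g n < n := by
        have h1 := g_cast n
        have h2 := F_lt n hn
        omega
      have hggn : g (g n) ≤ g n := by
        have h1 := g_cast (g n)
        rcases Nat.eq_zero_or_pos (g n) with h0 | hp
        · have h2 : g (g n) = 0 := by rw [h0]; unfold g; rw [F_zero]; rfl
          omega
        · have := F_lt (g n) hp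
          omega
      have hIH : 0 ≤ S θ (g (g n)) := ih _ (by omega)
      rcases Int.even_or_odd (F n) with he | ho
      · -- even case
        rw [Int.negOnePow_even _ he] at hid
        have hlow := low n hn
        simp at hid
        omega
      · -- odd case
        rw [Int.negOnePow_odd _ ho] at hid
        have hhigh := high n
        have hsuc2 := F_succ_le (g n)
        have hmono2 := F_mono (g n)
        simp at hid
        -- hid : S θ n = S θ (g (g n)) - (n - 2 F n - F (g n)) + 2  roughly
        rcases (by omega : (n : ℤ) ≤ 2 * F n + F (g n) + 2 ∨
            ((n : ℤ) = 2 * F n + F (g n) + 3 ∧ F (g n + 1) = F (g n) + 1)) with hc | ⟨hc, hd⟩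
        · omega
        · -- bad case
          have hFpos : 1 ≤ F n := by
            rcases ho with ⟨k, hk⟩
            have := F_nonneg n
            omega
          have hgpos : 1 ≤ g n := by have := g_cast n; omega
          have hlt : g (g n) < g n := by
            have h1 := g_cast (g n)
            have := F_lt (g n) hgpos
            omega
          have hj := jumpEq (g n) hd
          -- parity: F n odd, F n ≡ F (g (g n) + 1) mod 2
          have hFn : F n = 2 * F (g n) + 2 + F (g (g n) + 1) := by
            have := g_cast n; omega
          have hodd : Odd (F (g (g n) + 1)) := by
            rcases ho with ⟨k, hk⟩
            exact ⟨k - F (g n) - 1, by omega⟩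
          have hSg : S θ (g (g n) + 1) = S θ (g (g n)) + ((F (g (g n) + 1)).negOnePow : ℤ) :=
            S_succ (g (g n))
          rw [Int.negOnePow_odd _ hodd] at hSg
          have hIH2 : 0 ≤ S θ (g (g n) + 1) := ih _ (by omega)
          simp at hSg
          omega

end SWaux

theorem stmt_3 (n : ℕ) : 0 ≤ S (Real.sqrt 2 - 1) n := by
  have h := SWaux.main n
  simpa [SWaux.θ] using h
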